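/- With m ≥ 2, T ∈ ℝ, and τ(m,·) defined on integers coprime to m, assume: (i) τ(m, mr+1) = m·T + m(m−1)r/2 for all r ∈ ℤ; (ii) h(n) := τ(m,n) − (m−1)n/2 is nonincreasing over integers coprime to m; and (iii) τ(m,n) ≥ m·T + (m−1)(n−1)/2 for all n coprime to m. Then τ(m,n) = m·T + (m−1)(n−1)/2 for all n coprime to m. -/

import Mathlib

theorem stmt_9 (m : ℤ) (hm : 2 ≤ m) (T : ℝ) (τ : ℤ → ℝ)
    (hi : ∀ r : ℤ, τ (m * r + 1) = (m : ℝ) * T + (m : ℝ) * (m - 1) * r / 2)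
    (hii : ∀ n r : ℤ, Int.gcd n m = 1 → Int.gcd r m = 1 → r < n →
      τ n - ((m : ℝ) - 1) * n / 2 ≤ τ r - ((m : ℝ) - 1) * r / 2)
    (hiii : ∀ n : ℤ, Int.gcd n m = 1 →
      (m : ℝ) * T + ((m : ℝ) - 1) * ((n : ℝ) - 1) / 2 ≤ τ n) :
    ∀ n : ℤ, Int.gcd n m = 1 →
      τ n = (m : ℝ) * T + ((m : ℝ) - 1) * ((n : ℝ) - 1) / 2 := by
  intro n hn
  set r : ℤ := -(|n| + 1) with hr
  have hr0 : r ≤ 0 := by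
    have := abs_nonneg n; omega
  have hlt : m * r + 1 < n := by
    have h1 : m * r ≤ 2 * r := mul_le_mul_of_nonpos_right hm hr0
    have h2 : -|n| ≤ n := neg_abs_le n
    have h3 : 0 ≤ |n| := abs_nonneg n
    omega
  have hcop : Int.gcd (m * r + 1) m = 1 := by
    rw [← Int.isCoprime_iff_gcd_eq_one]
    exact ⟨1, -r, by ring⟩
  have h3 := hii n (m * r + 1) hn hcop hlt
  rw [hi r] at h3
  have h4 := hiii n hn
  push_cast at h3
  linarith
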